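/- Let 1 ≤ d_1 ≤ d_2 ≤ d_3 be integers with d_3 ≥ d_1 + d_2, and write f_{d_1}·f_{d_2}·f_{d_3} = ∑_{i=0}^{d_1+d_2+d_3} b_i t^i. Then the coefficients b_i are strictly increasing for 0 ≤ i ≤ d_1 + d_2, constant for d_1 + d_2 ≤ i ≤ d_3, and strictly decreasing for d_3 ≤ i ≤ d_1 + d_2 + d_3. -/

import Mathlib

open Polynomial

/-- `fpoly d` is the polynomial `f_d = 1 + t + t^2 + ⋯ + t^d`. -/
noncomputable def fpoly (d : ℕ) : Polynomial ℝ :=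
  ∑ i ∈ Finset.range (d + 1), Polynomial.X ^ i

/-- A sequence `a_0, …, a_d` is strictly unimodal if, for `d = 2m`,
`a_0 < a_1 < ⋯ < a_m > a_{m+1} > ⋯ > a_{2m}`, and for `d = 2m+1`,
`a_0 < a_1 < ⋯ < a_m = a_{m+1} > a_{m+2} > ⋯ > a_{2m+1}`. -/
def StrictlyUnimodalSeq (d : ℕ) (a : ℕ → ℝ) : Prop :=
  (∀ i, i < d / 2 → a i < a (i + 1)) ∧
  (Odd d → a (d / 2) = a (d / 2 + 1)) ∧
  (∀ i, (d + 1) / 2 ≤ i → i < d → a (i + 1) < a i)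

/-- The sequence `a` strictly increases on `[0, e]`, is constant on `[e, p]`,
and strictly decreases on `[p, D]`. -/
def IncConstDec (a : ℕ → ℝ) (e p D : ℕ) : Prop :=
  (∀ i, i < e → a i < a (i + 1)) ∧
  (∀ i, e ≤ i → i < p → a i = a (i + 1)) ∧
  (∀ i, p ≤ i → i < D → a (i + 1) < a i)


lemma fpoly_coeff (d k : ℕ) : (fpoly d).coeff k = if k ≤ d then 1 else 0 := by
  simp [fpoly, Polynomial.finset_sum_coeff, Polynomial.coeff_X_pow,
    Finset.sum_ite_eq, Nat.lt_succ_iff]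

lemma fpoly_key (q : Polynomial ℝ) (d n : ℕ) :
    (q * fpoly d).coeff (n + 1) =
      (q * fpoly d).coeff n + q.coeff (n + 1) -
        (if d ≤ n then q.coeff (n - d) else 0) := by
  have h : fpoly d * (X - 1) = X ^ (d + 1) - 1 := by
    rw [fpoly]; exact geom_sum_mul X (d + 1)
  have h2 : q * fpoly d * X - q * fpoly d = q * X ^ (d + 1) - q := by
    calc q * fpoly d * X - q * fpoly d = q * (fpoly d * (X - 1)) := by ring
    _ = q * X ^ (d + 1) - q := by rw [h]; ring
  have := congrArg (fun p => p.coeff (n + 1)) h2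
  simp only [Polynomial.coeff_sub, Polynomial.coeff_mul_X,
    Polynomial.coeff_mul_X_pow'] at this
  simp only [Nat.add_le_add_iff_right, Nat.succ_sub_succ] at this
  by_cases hdn : d ≤ n <;> simp only [hdn, if_true, if_false] at this ⊢ <;> linarith

lemma fpoly_mul_coeff_pos (d₁ d₂ k : ℕ) (hk : k ≤ d₁ + d₂) :
    0 < (fpoly d₁ * fpoly d₂).coeff k := by
  rw [Polynomial.coeff_mul]
  apply Finset.sum_pos'
  · intro x _
    simp only [fpoly_coeff]
    split_ifs <;> norm_num
  · refine ⟨(min k d₁, k - min k d₁), ?_, ?_⟩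
    · rw [Finset.HasAntidiagonal.mem_antidiagonal]; omega
    · simp only [fpoly_coeff]
      rw [if_pos (min_le_right k d₁), if_pos (by omega)]
      norm_num

lemma fpoly_mul_coeff_zero (d₁ d₂ k : ℕ) (hk : d₁ + d₂ < k) :
    (fpoly d₁ * fpoly d₂).coeff k = 0 := by
  rw [Polynomial.coeff_mul]
  apply Finset.sum_eq_zero
  intro x hx
  rw [Finset.HasAntidiagonal.mem_antidiagonal] at hx
  simp only [fpoly_coeff]
  rcases le_or_gt x.1 d₁ with h | h
  · rw [if_neg (show ¬ x.2 ≤ d₂ by omega), mul_zero]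
  · rw [if_neg (show ¬ x.1 ≤ d₁ by omega), zero_mul]

/-- For `1 ≤ d₁ ≤ d₂ ≤ d₃` with `d₃ ≥ d₁ + d₂`, the coefficients of
`f_{d₁}·f_{d₂}·f_{d₃}` strictly increase on `[0, d₁+d₂]`, are constant on `[d₁+d₂, d₃]`,
and strictly decrease on `[d₃, d₁+d₂+d₃]`. -/
theorem fpoly_triple_mul_incConstDec (d₁ d₂ d₃ : ℕ)
    (h1 : 1 ≤ d₁) (h12 : d₁ ≤ d₂) (h23 : d₂ ≤ d₃) (h3 : d₁ + d₂ ≤ d₃) :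
    IncConstDec ((fpoly d₁ * fpoly d₂ * fpoly d₃).coeff) (d₁ + d₂) d₃ (d₁ + d₂ + d₃) := by
  set q := fpoly d₁ * fpoly d₂ with hq
  refine ⟨?_, ?_, ?_⟩
  · intro i hi
    have := fpoly_key q d₃ i
    rw [if_neg (by omega)] at this
    have hp : 0 < q.coeff (i + 1) := fpoly_mul_coeff_pos d₁ d₂ (i + 1) (by omega)
    linarith
  · intro i hi₁ hi₂
    have := fpoly_key q d₃ i
    rw [if_neg (by omega)] at this
    have hz : q.coeff (i + 1) = 0 := fpoly_mul_coeff_zero d₁ d₂ (i + 1) (by omega)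
    linarith
  · intro i hi₁ hi₂
    have := fpoly_key q d₃ i
    rw [if_pos (by omega)] at this
    have hz : q.coeff (i + 1) = 0 := fpoly_mul_coeff_zero d₁ d₂ (i + 1) (by omega)
    have hp : 0 < q.coeff (i - d₃) := fpoly_mul_coeff_pos d₁ d₂ (i - d₃) (by omega)
    linarith
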